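/- If a linear functional ⟨·⟩ on operators on Sym^M(H) satisfies ⟨Γ(U_θ)* X Γ(U_θ)⟩ = ⟨X⟩ for all θ ∈ ℝ^N with U_θ = Σ_k e^{iθ_k} p_{ψ_k}, then ⟨dΓ(p_{ψ_m} p_a p_{ψ_k})⟩ = 0 for all m ≠ k. -/

import Mathlib

open Complex Finset
open scoped InnerProductSpace

noncomputable section

variable {H : Type*} [NormedAddCommGroup H] [InnerProductSpace ℂ H] [FiniteDimensional ℂ H]

/-- The rank-one operator `|u⟩⟨v|`. -/
def rankOne (u v : H) : H →ₗ[ℂ] H where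
  toFun x := ⟪v, x⟫_ℂ • u
  map_add' x y := by simp [inner_add_right, add_smul]
  map_smul' c x := by simp [inner_smul_right, smul_smul]

/-- The phase unitary `U(θ) = Σ_n e^{iθ_n} |a_n⟩⟨a_n|`. -/
def phaseU {N : ℕ} (a : OrthonormalBasis (Fin N) ℂ H) (θ : Fin N → ℝ) : H →ₗ[ℂ] H :=
  ∑ n, Complex.exp ((θ n : ℂ) * Complex.I) • rankOne (a n) (a n)

set_option linter.unusedVariables false in
lemma rankOne_apply (u v x : H) : rankOne u v x = ⟪v, x⟫_ℂ • u := rfl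

lemma inner_psi {N : ℕ} (ψ : OrthonormalBasis (Fin N) ℂ H) (i j : Fin N) :
    ⟪ψ i, ψ j⟫_ℂ = if i = j then 1 else 0 :=
  orthonormal_iff_ite.mp ψ.orthonormal i j

lemma phaseU_apply {N : ℕ} (ψ : OrthonormalBasis (Fin N) ℂ H) (θ : Fin N → ℝ) (x : H) :
    phaseU ψ θ x = ∑ n, Complex.exp ((θ n : ℂ) * Complex.I) • (⟪ψ n, x⟫_ℂ • ψ n) := by
  simp [phaseU, rankOne_apply, LinearMap.sum_apply]

lemma phaseU_apply_basis {N : ℕ} (ψ : OrthonormalBasis (Fin N) ℂ H) (θ : Fin N → ℝ) (j : Fin N) :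
    phaseU ψ θ (ψ j) = Complex.exp ((θ j : ℂ) * Complex.I) • ψ j := by
  rw [phaseU_apply, Finset.sum_eq_single j]
  · simp [inner_psi]
  · intro n _ hn
    simp [inner_psi, hn]
  · simp

lemma inner_phaseU {N : ℕ} (ψ : OrthonormalBasis (Fin N) ℂ H) (θ : Fin N → ℝ) (j : Fin N)
    (x : H) : ⟪ψ j, phaseU ψ θ x⟫_ℂ = Complex.exp ((θ j : ℂ) * Complex.I) * ⟪ψ j, x⟫_ℂ := by
  rw [phaseU_apply, inner_sum, Finset.sum_eq_single j]
  · simp [inner_smul_right, inner_psi]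
  · intro n _ hn
    simp [inner_smul_right, inner_psi, Ne.symm hn]
  · simp

lemma conj_exp_mul_I (r : ℝ) :
    (starRingEnd ℂ) (Complex.exp ((r : ℂ) * Complex.I)) = Complex.exp ((-r : ℂ) * Complex.I) := by
  rw [← Complex.exp_conj]
  simp [map_mul, Complex.conj_ofReal, Complex.conj_I]

lemma phaseU_inner {N : ℕ} (ψ : OrthonormalBasis (Fin N) ℂ H) (θ : Fin N → ℝ) (u v : H) :
    ⟪phaseU ψ θ u, v⟫_ℂ = ⟪u, phaseU ψ (-θ) v⟫_ℂ := by
  rw [phaseU_apply, sum_inner, phaseU_apply, inner_sum]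
  refine Finset.sum_congr rfl fun n _ => ?_
  rw [inner_smul_left, inner_smul_left, inner_smul_right, inner_smul_right,
    inner_conj_symm, conj_exp_mul_I]
  simp only [Pi.neg_apply, Complex.ofReal_neg, neg_mul]
  ring

lemma phaseU_neg_comp {N : ℕ} (ψ : OrthonormalBasis (Fin N) ℂ H) (θ : Fin N → ℝ) (x : H) :
    phaseU ψ (-θ) (phaseU ψ θ x) = x := by
  rw [phaseU_apply ψ θ, map_sum]
  have : ∀ n, phaseU ψ (-θ) (Complex.exp ((θ n : ℂ) * Complex.I) • (⟪ψ n, x⟫_ℂ • ψ n))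
      = ⟪ψ n, x⟫_ℂ • ψ n := by
    intro n
    rw [map_smul, map_smul, phaseU_apply_basis, smul_smul, smul_smul]
    have hexp : Complex.exp ((θ n : ℂ) * Complex.I) *
        Complex.exp ((((-θ) n : ℝ) : ℂ) * Complex.I) = 1 := by
      rw [← Complex.exp_add, Pi.neg_apply, Complex.ofReal_neg, neg_mul, add_neg_cancel]
      exact Complex.exp_zero
    congr 1
    linear_combination ⟪ψ n, x⟫_ℂ * hexp
  rw [Finset.sum_congr rfl fun n _ => this n]
  exact ψ.sum_repr' x

/-- a linear functional on the operators of `Sym^M(H)` that is invariant under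
conjugation by all `Γ(U_θ)`, `U_θ = Σ_k e^{iθ_k} p_{ψ_k}`, vanishes on all off-diagonal
operators `dΓ(p_{ψ_m} p_a p_{ψ_k})`, `m ≠ k`. -/
theorem stmt_15 {N M : ℕ} {F : Type*} [NormedAddCommGroup F] [InnerProductSpace ℂ F]
    [FiniteDimensional ℂ F]
    (ψ : OrthonormalBasis (Fin N) ℂ H) (a : H) (ha : ‖a‖ = 1)
    (sym : MultilinearMap ℂ (fun _ : Fin M => H) F)
    (hsymm : ∀ (φ : Fin M → H) (τ : Equiv.Perm (Fin M)), sym (φ ∘ τ) = sym φ)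
    (hspan : Submodule.span ℂ (Set.range ⇑sym) = ⊤)
    (hinner : ∀ φ χ : Fin M → H,
      ⟪sym φ, sym χ⟫_ℂ = ∑ τ : Equiv.Perm (Fin M), ∏ i, ⟪φ i, χ (τ i)⟫_ℂ)
    (Γ : (H →ₗ[ℂ] H) → (F →ₗ[ℂ] F))
    (hΓ : ∀ (O : H →ₗ[ℂ] H) (φ : Fin M → H), Γ O (sym φ) = sym (fun i => O (φ i)))
    (dΓ : (H →ₗ[ℂ] H) → (F →ₗ[ℂ] F))
    (hdΓ : ∀ (X : H →ₗ[ℂ] H) (φ : Fin M → H),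
      dΓ X (sym φ) = ∑ m, sym (Function.update φ m (X (φ m))))
    (E : (F →ₗ[ℂ] F) →ₗ[ℂ] ℂ)
    (hinv : ∀ (θ : Fin N → ℝ) (X : F →ₗ[ℂ] F),
      E (LinearMap.adjoint (Γ (phaseU ψ θ)) * X * Γ (phaseU ψ θ)) = E X) :
    ∀ m k : Fin N, m ≠ k →
      E (dΓ (rankOne (ψ m) (ψ m) * rankOne a a * rankOne (ψ k) (ψ k))) = 0 := by
  intro m k hmk
  set X := rankOne (ψ m) (ψ m) * rankOne a a * rankOne (ψ k) (ψ k) with hX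
  set θ : Fin N → ℝ := fun n => if n = k then Real.pi else 0 with hθ
  -- the operator X sends y to a scalar multiple of ψ m
  have hXapp : ∀ y : H, X y = (⟪ψ k, y⟫_ℂ * ⟪a, ψ k⟫_ℂ * ⟪ψ m, a⟫_ℂ) • ψ m := by
    intro y
    simp only [hX, Module.End.mul_apply, rankOne_apply, inner_smul_right, smul_smul]
  -- key pointwise identity
  have hkey : ∀ x : H, phaseU ψ (-θ) (X (phaseU ψ θ x)) = (-1 : ℂ) • X x := by
    intro x
    rw [hXapp, hXapp, inner_phaseU, map_smul, phaseU_apply_basis, smul_smul, smul_smul]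
    congr 1
    have h1 : θ k = Real.pi := by simp [hθ]
    have h2 : (-θ) m = 0 := by simp [hθ, hmk]
    rw [h1, h2]
    simp [Complex.exp_pi_mul_I]
  -- the inner-product identity for the second quantization of phase unitaries
  have key0 : ∀ (φ χ : Fin M → H),
      ⟪sym χ, Γ (phaseU ψ (-θ)) (sym φ)⟫_ℂ = ⟪Γ (phaseU ψ θ) (sym χ), sym φ⟫_ℂ := by
    intro φ χ
    rw [hΓ, hΓ, hinner, hinner]
    refine Finset.sum_congr rfl fun τ _ => Finset.prod_congr rfl fun i _ => ?_
    rw [phaseU_inner]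
  have keyB : ∀ (x : F) (χ : Fin M → H),
      ⟪sym χ, Γ (phaseU ψ (-θ)) x⟫_ℂ = ⟪Γ (phaseU ψ θ) (sym χ), x⟫_ℂ := by
    intro x χ
    have hmaps : (innerₛₗ ℂ (sym χ)).comp (Γ (phaseU ψ (-θ)))
        = innerₛₗ ℂ (Γ (phaseU ψ θ) (sym χ)) := by
      apply LinearMap.ext_on hspan
      rintro _ ⟨φ, rfl⟩
      simpa using key0 φ χ
    simpa using LinearMap.congr_fun hmaps x
  have hsesq : ∀ x y : F, ⟪Γ (phaseU ψ (-θ)) x, y⟫_ℂ = ⟪x, Γ (phaseU ψ θ) y⟫_ℂ := by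
    intro x y
    have hmaps : innerₛₗ ℂ (Γ (phaseU ψ (-θ)) x) = (innerₛₗ ℂ x).comp (Γ (phaseU ψ θ)) := by
      apply LinearMap.ext_on hspan
      rintro _ ⟨χ, rfl⟩
      have h := keyB x χ
      simp only [innerₛₗ_apply_apply, LinearMap.comp_apply]
      calc ⟪Γ (phaseU ψ (-θ)) x, sym χ⟫_ℂ
          = (starRingEnd ℂ) ⟪sym χ, Γ (phaseU ψ (-θ)) x⟫_ℂ := (inner_conj_symm _ _).symm
        _ = (starRingEnd ℂ) ⟪Γ (phaseU ψ θ) (sym χ), x⟫_ℂ := by rw [h]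
        _ = ⟪x, Γ (phaseU ψ θ) (sym χ)⟫_ℂ := inner_conj_symm _ _
    simpa using LinearMap.congr_fun hmaps y
  have hadj : LinearMap.adjoint (Γ (phaseU ψ θ)) = Γ (phaseU ψ (-θ)) :=
    ((LinearMap.eq_adjoint_iff _ _).mpr hsesq).symm
  -- operator identity
  have hop : LinearMap.adjoint (Γ (phaseU ψ θ)) * dΓ X * Γ (phaseU ψ θ)
      = (-1 : ℂ) • dΓ X := by
    apply LinearMap.ext_on hspan
    rintro _ ⟨φ, rfl⟩
    rw [Module.End.mul_apply, Module.End.mul_apply, hadj, hΓ, hdΓ, map_sum,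
      LinearMap.smul_apply, hdΓ, Finset.smul_sum]
    refine Finset.sum_congr rfl fun j _ => ?_
    rw [hΓ]
    have heq : (fun i => phaseU ψ (-θ)
        (Function.update (fun i => phaseU ψ θ (φ i)) j (X (phaseU ψ θ (φ j))) i))
        = Function.update φ j ((-1 : ℂ) • X (φ j)) := by
      funext i
      rcases eq_or_ne i j with h | h
      · subst h
        simp [Function.update_self, hkey]
      · simp [Function.update_of_ne h, phaseU_neg_comp]
    rw [heq, sym.map_update_smul]
  have h1 := hinv θ (dΓ X)
  rw [hop, map_smul, smul_eq_mul] at h1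
  linear_combination (-1/2 : ℂ) * h1
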